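/- Let f : M → ℂ^P and g : M → ℂ^Q be functions and define R(z,w) = Σ_{p=1}^P f_p(z)·conj(f_p(w)) − Σ_{q=1}^Q g_q(z)·conj(g_q(w)). Then for every k points z_1, …, z_k ∈ M, the determinant of the k×k matrix with (i,j) entry R(z_i, z_j) equals Σ_{m=0}^k (−1)^m Σ_{A,B} |det M_{A,B}(z)|², where the inner sum is over all subsets A ⊆ {1,…,P} with |A| = k−m and B ⊆ {1,…,Q} with |B| = m, and M_{A,B}(z) is the k×k matrix whose columns are the vectors (f_a(z_1), …, f_a(z_k)) for a ∈ A together with the vectors (g_b(z_1), …, g_b(z_k)) for b ∈ B. -/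

import Mathlib

open scoped ComplexOrder

/-- Given component functions `f : M → ℂ^P`, `g : M → ℂ^Q`, points `z_1, …, z_k`, and
subsets `A ⊆ {1,…,P}`, `B ⊆ {1,…,Q}` with `|A| + |B| = k`, this is the determinant of
the `k × k` matrix `M_{A,B}(z)` whose columns are the vectors `(f_a(z_1), …, f_a(z_k))`
for `a ∈ A` together with `(g_b(z_1), …, g_b(z_k))` for `b ∈ B` (in some order; the
squared absolute value of the determinant does not depend on the ordering of the
columns).  If `|A| + |B| ≠ k` the value is defined to be `0`. -/
noncomputable def subDet {M : Type*} {P Q k : ℕ} (f : M → Fin P → ℂ) (g : M → Fin Q → ℂ)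
    (z : Fin k → M) (A : Finset (Fin P)) (B : Finset (Fin Q)) : ℂ :=
  if h : Fintype.card (↥A ⊕ ↥B) = k then
    Matrix.det (Matrix.of fun i j =>
      Sum.elim (fun a : ↥A => f (z i) a) (fun b : ↥B => g (z i) b)
        ((Fintype.equivFinOfCardEq h).symm j))
  else 0

/-- Cauchy–Binet formula over a commutative ring, with an arbitrary choice of
enumeration `e S` of each `k`-element subset `S`. -/
theorem cauchyBinet {R : Type*} [CommRing R] {n : Type*} [Fintype n] [DecidableEq n] {k : ℕ}
    (A : Matrix (Fin k) n R) (B : Matrix n (Fin k) R)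
    (e : Finset n → Fin k → n)
    (he : ∀ S ∈ Finset.univ.powersetCard k,
      Function.Injective (e S) ∧ Set.range (e S) = ↑S) :
    (A * B).det = ∑ S ∈ Finset.univ.powersetCard k,
      (A.submatrix id (e S)).det * (B.submatrix (e S) id).det := by
  classical
  have step1 : (A * B).det = ∑ p : Fin k → n, (∏ i, B (p i) i) * (A.submatrix id p).det := by
    simp only [Matrix.det_apply', Matrix.mul_apply, Finset.prod_univ_sum, Finset.mul_sum,
      Fintype.piFinset_univ, Matrix.submatrix_apply, id]
    rw [Finset.sum_comm]
    refine Finset.sum_congr rfl fun p _ => ?_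
    refine Finset.sum_congr rfl fun σ _ => ?_
    rw [Finset.prod_mul_distrib]
    ring
  have step2 : (∑ p : Fin k → n, (∏ i, B (p i) i) * (A.submatrix id p).det)
      = ∑ p ∈ Finset.univ.filter (fun p : Fin k → n => Function.Injective p),
          (∏ i, B (p i) i) * (A.submatrix id p).det := by
    refine (Finset.sum_subset (Finset.filter_subset _ _) fun p _ hp => ?_).symm
    simp only [Finset.mem_filter, Finset.mem_univ, true_and] at hp
    rw [Function.Injective] at hp
    push_neg at hp
    obtain ⟨i, j, hij, hne⟩ := hp
    rw [Matrix.det_zero_of_column_eq hne (fun x => by simp [hij]), mul_zero]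
  have key : ∑ x ∈ ((Finset.univ : Finset n).powersetCard k).sigma
        (fun _ => (Finset.univ : Finset (Equiv.Perm (Fin k)))),
        ((∏ i, B ((e x.1 ∘ x.2) i) i) * (A.submatrix id (e x.1 ∘ x.2)).det)
      = ∑ p ∈ Finset.univ.filter (fun p : Fin k → n => Function.Injective p),
          (∏ i, B (p i) i) * (A.submatrix id p).det := by
    refine Finset.sum_bij (fun x _hx => e x.1 ∘ x.2) ?_ ?_ ?_ ?_
    · rintro ⟨S, τ⟩ hx
      simp only [Finset.mem_sigma, Finset.mem_univ, and_true] at hx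
      simp only [Finset.mem_filter, Finset.mem_univ, true_and]
      exact (he S hx).1.comp τ.injective
    · rintro ⟨S, τ⟩ hx ⟨S', τ'⟩ hx' hmm
      simp only [Finset.mem_sigma, Finset.mem_univ, and_true] at hx hx'
      dsimp only at hmm
      have hr : (S : Set n) = (S' : Set n) := by
        rw [← (he S hx).2, ← (he S' hx').2,
          ← τ.surjective.range_comp (e S), ← τ'.surjective.range_comp (e S'), hmm]
      have hS : S = S' := Finset.coe_injective hr
      subst hS
      have hτ : τ = τ' :=
        Equiv.coe_fn_injective (funext fun i => (he S hx).1 (congrFun hmm i))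
      simp [hτ]
    · intro p hp
      simp only [Finset.mem_filter, Finset.mem_univ, true_and] at hp
      set S : Finset n := Finset.univ.image p with hS
      have hSmem : S ∈ (Finset.univ : Finset n).powersetCard k := by
        rw [Finset.mem_powersetCard]
        exact ⟨Finset.subset_univ _, by
          rw [hS, Finset.card_image_of_injective _ hp, Finset.card_univ, Fintype.card_fin]⟩
      have hrange : Set.range (e S) = Set.range p := by
        rw [(he S hSmem).2, hS]
        ext x; simp
      have hq : ∀ i, p i ∈ Set.range (e S) := fun i => hrange ▸ Set.mem_range_self i
      set q : Fin k → Fin k := fun i =>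
        (Equiv.ofInjective (e S) (he S hSmem).1).symm ⟨p i, hq i⟩ with hqdef
      have heq : ∀ i, e S (q i) = p i := fun i =>
        congrArg Subtype.val
          ((Equiv.ofInjective (e S) (he S hSmem).1).apply_symm_apply ⟨p i, hq i⟩)
      have hqinj : Function.Injective q := fun i j hij =>
        hp (by rw [← heq i, ← heq j, hij])
      have hqbij := (Finite.injective_iff_bijective).1 hqinj
      refine ⟨⟨S, Equiv.ofBijective q hqbij⟩, Finset.mem_sigma.2 ⟨hSmem, Finset.mem_univ _⟩, ?_⟩
      funext i
      exact heq i
    · intros a ha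
      rfl
  rw [step1, step2, ← key, Finset.sum_sigma]
  refine Finset.sum_congr rfl fun S hS => ?_
  have h1 : ∀ τ : Equiv.Perm (Fin k),
      (A.submatrix id (e S ∘ τ)).det = (Equiv.Perm.sign τ : R) * (A.submatrix id (e S)).det := by
    intro τ
    have hsub : A.submatrix id (e S ∘ τ) = (A.submatrix id (e S)).submatrix id τ := by
      ext i j; simp
    rw [hsub, Matrix.det_permute']
  have h2 : (B.submatrix (e S) id).det
      = ∑ τ : Equiv.Perm (Fin k), (Equiv.Perm.sign τ : R) * ∏ i, B (e S (τ i)) i := by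
    rw [Matrix.det_apply']
    rfl
  calc ∑ τ : Equiv.Perm (Fin k), (∏ i, B ((e S ∘ τ) i) i) * (A.submatrix id (e S ∘ τ)).det
      = ∑ τ : Equiv.Perm (Fin k),
          ((Equiv.Perm.sign τ : R) * ∏ i, B (e S (τ i)) i) * (A.submatrix id (e S)).det := by
        refine Finset.sum_congr rfl fun τ _ => ?_
        rw [h1 τ]
        simp only [Function.comp_apply]
        ring
    _ = (A.submatrix id (e S)).det * (B.submatrix (e S) id).det := by
        rw [← Finset.sum_mul, ← h2, mul_comm]

/-- `|det|²` of a column-submatrix only depends on the set of chosen columns. -/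
theorem normSq_det_submatrix_congr {n : Type*} {k : ℕ} (M : Matrix (Fin k) n ℂ)
    (u v : Fin k → n) (hu : Function.Injective u) (hv : Function.Injective v)
    (h : Set.range u = Set.range v) :
    Complex.normSq (M.submatrix id u).det = Complex.normSq (M.submatrix id v).det := by
  have hmem : ∀ i, v i ∈ Set.range u := fun i => h ▸ Set.mem_range_self i
  set q : Fin k → Fin k := fun i => (Equiv.ofInjective u hu).symm ⟨v i, hmem i⟩ with hq
  have heq : ∀ i, u (q i) = v i := fun i =>
    congrArg Subtype.val ((Equiv.ofInjective u hu).apply_symm_apply ⟨v i, hmem i⟩)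
  have hqinj : Function.Injective q := fun i j hij => hv (by rw [← heq i, ← heq j, hij])
  have hqbij := (Finite.injective_iff_bijective).1 hqinj
  set σ := Equiv.ofBijective q hqbij with hσ
  have hsub : M.submatrix id v = (M.submatrix id u).submatrix id σ := by
    ext i j
    simp only [Matrix.submatrix_apply, id]
    rw [show σ j = q j from rfl, heq j]
  rw [hsub, Matrix.det_permute']
  rcases Int.units_eq_one_or (Equiv.Perm.sign σ) with hs | hs <;>
    simp [hs, Complex.normSq_neg]

theorem Finset.disjSum_toLeft_toRight {α β : Type*} (u : Finset (α ⊕ β)) :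
    u.toLeft.disjSum u.toRight = u := by
  ext x
  cases x <;> simp

/-- Regrouping a sum over `k`-element subsets of a sum type. -/
theorem sum_powersetCard_sumType {α β M : Type*} [Fintype α] [Fintype β]
    [DecidableEq α] [DecidableEq β] [AddCommMonoid M]
    (k : ℕ) (F : Finset (α ⊕ β) → M) :
    ∑ S ∈ Finset.univ.powersetCard k, F S =
      ∑ m ∈ Finset.range (k + 1), ∑ A ∈ Finset.univ.powersetCard (k - m),
        ∑ B ∈ Finset.univ.powersetCard m, F (A.disjSum B) := by
  classical
  have : ∑ m ∈ Finset.range (k + 1), ∑ A ∈ Finset.univ.powersetCard (k - m),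
        ∑ B ∈ Finset.univ.powersetCard m, F (A.disjSum B)
      = ∑ x ∈ (Finset.range (k + 1)).sigma (fun m =>
          (Finset.univ.powersetCard (k - m)) ×ˢ (Finset.univ.powersetCard m)),
          F (x.2.1.disjSum x.2.2) := by
    rw [Finset.sum_sigma]
    refine Finset.sum_congr rfl fun m _ => ?_
    rw [Finset.sum_product]
  rw [this]
  refine (Finset.sum_bij (fun x _hx => x.2.1.disjSum x.2.2) ?_ ?_ ?_ ?_).symm
  · rintro ⟨m, A, B⟩ hx
    simp only [Finset.mem_sigma, Finset.mem_product, Finset.mem_range,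
      Finset.mem_powersetCard_univ] at hx
    rw [Finset.mem_powersetCard_univ, Finset.card_disjSum, hx.2.1, hx.2.2]
    omega
  · rintro ⟨m, A, B⟩ hx ⟨m', A', B'⟩ hx' hmm
    simp only [Finset.mem_sigma, Finset.mem_product, Finset.mem_range,
      Finset.mem_powersetCard_univ] at hx hx'
    dsimp only at hmm
    obtain ⟨hA, hB⟩ := Finset.disjSum_inj.1 hmm
    subst hA; subst hB
    have : m = m' := by rw [← hx.2.2, ← hx'.2.2]
    subst this
    rfl
  · intro S hS
    rw [Finset.mem_powersetCard_univ] at hS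
    have hcards := Finset.card_toLeft_add_card_toRight (u := S)
    exact ⟨⟨S.toRight.card, (S.toLeft, S.toRight)⟩,
      Finset.mem_sigma.2 ⟨Finset.mem_range.2 ((by omega : S.toRight.card < k + 1)),
        Finset.mem_product.2 ⟨Finset.mem_powersetCard_univ.2
            ((by omega : S.toLeft.card = k - S.toRight.card)),
          Finset.mem_powersetCard_univ.2 rfl⟩⟩,
      Finset.disjSum_toLeft_toRight S⟩
  · intros a ha
    rfl

/-- Formula (3): with `R(z,w) = Σ_p f_p(z) conj(f_p(w)) − Σ_q g_q(z) conj(g_q(w))`,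
`det (R(z_i,z_j)) = Σ_{m=0}^k (−1)^m Σ_{|A| = k−m, |B| = m} |det M_{A,B}(z)|²`. -/
theorem stmt3 {M : Type*} (P Q k : ℕ) (hk : 1 ≤ k)
    (f : M → Fin P → ℂ) (g : M → Fin Q → ℂ) (R : M × M → ℂ)
    (hR : ∀ z w : M, R (z, w) =
      ∑ p, f z p * (starRingEnd ℂ) (f w p) - ∑ q, g z q * (starRingEnd ℂ) (g w q))
    (z : Fin k → M) :
    (Matrix.of fun i j => R (z i, z j)).det =
      ∑ m ∈ Finset.range (k + 1), (-1 : ℂ) ^ m *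
        ((∑ A ∈ Finset.univ.powersetCard (k - m), ∑ B ∈ Finset.univ.powersetCard m,
            Complex.normSq (subDet f g z A B) : ℝ) : ℂ) := by
  classical
  haveI : Nonempty (Fin k) := ⟨⟨0, hk⟩⟩
  rcases isEmpty_or_nonempty (Fin P ⊕ Fin Q) with hE | hN
  · -- degenerate case: no components at all
    haveI : IsEmpty (Fin P) := ⟨fun a => hE.false (Sum.inl a)⟩
    haveI : IsEmpty (Fin Q) := ⟨fun b => hE.false (Sum.inr b)⟩
    have hP : P = 0 := by rw [← Fintype.card_fin P]; exact Fintype.card_eq_zero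
    have hQ : Q = 0 := by rw [← Fintype.card_fin Q]; exact Fintype.card_eq_zero
    have hzero : (Matrix.of fun i j => R (z i, z j)) = 0 := by
      ext i j
      rw [Matrix.of_apply, hR]
      simp
    rw [hzero, Matrix.det_zero]
    refine (Finset.sum_eq_zero fun m hm => ?_).symm
    rw [Finset.mem_range] at hm
    have hz : (∑ A ∈ Finset.univ.powersetCard (k - m), ∑ B ∈ Finset.univ.powersetCard m,
        Complex.normSq (subDet f g z A B) : ℝ) = 0 := by
      by_cases hmk : m = k
      · refine Finset.sum_eq_zero fun A _ => ?_
        have : (Finset.univ : Finset (Fin Q)).powersetCard m = ∅ := by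
          rw [Finset.powersetCard_eq_empty]
          simp only [Finset.card_univ, Fintype.card_fin]
          omega
        rw [this, Finset.sum_empty]
      · have : (Finset.univ : Finset (Fin P)).powersetCard (k - m) = ∅ := by
          rw [Finset.powersetCard_eq_empty]
          simp only [Finset.card_univ, Fintype.card_fin]
          omega
        rw [this, Finset.sum_empty]
    rw [hz, Complex.ofReal_zero, mul_zero]
  · set n := Fin P ⊕ Fin Q
    set Amat : Matrix (Fin k) n ℂ :=
      Matrix.of fun i x => Sum.elim (f (z i)) (g (z i)) x with hAmat
    set Bmat : Matrix n (Fin k) ℂ :=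
      Matrix.of fun x j => Sum.elim (fun p => (starRingEnd ℂ) (f (z j) p))
        (fun q => -(starRingEnd ℂ) (g (z j) q)) x with hBmat
    have hAB : (Matrix.of fun i j => R (z i, z j)) = Amat * Bmat := by
      ext i j
      rw [Matrix.of_apply, hR, Matrix.mul_apply, Fintype.sum_sum_type]
      simp only [hAmat, hBmat, Matrix.of_apply, Sum.elim_inl, Sum.elim_inr]
      simp only [mul_neg, Finset.sum_neg_distrib]
      ring
    set e : Finset n → Fin k → n := fun S =>
      if h : Fintype.card ↥S = k then fun i => ((Fintype.equivFinOfCardEq h).symm i : n)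
      else fun _ => Classical.arbitrary n with he_def
    have he : ∀ S ∈ (Finset.univ : Finset n).powersetCard k,
        Function.Injective (e S) ∧ Set.range (e S) = ↑S := by
      intro S hS
      rw [Finset.mem_powersetCard_univ] at hS
      have hcard : Fintype.card ↥S = k := by rw [Fintype.card_coe, hS]
      rw [he_def]
      simp only [dif_pos hcard]
      constructor
      · exact Subtype.val_injective.comp (Fintype.equivFinOfCardEq hcard).symm.injective
      · rw [show (fun i => ((Fintype.equivFinOfCardEq hcard).symm i : n))
              = Subtype.val ∘ (Fintype.equivFinOfCardEq hcard).symm from rfl,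
            Set.range_comp, Equiv.range_eq_univ, Set.image_univ]
        ext x; simp
    rw [hAB, cauchyBinet Amat Bmat e he, sum_powersetCard_sumType]
    refine Finset.sum_congr rfl fun m hm => ?_
    rw [Finset.mem_range] at hm
    push_cast
    rw [Finset.mul_sum]
    refine Finset.sum_congr rfl fun A hA => ?_
    rw [Finset.mul_sum]
    refine Finset.sum_congr rfl fun B hB => ?_
    rw [Finset.mem_powersetCard_univ] at hA hB
    set S := A.disjSum B with hSdef
    have hScard : S.card = k := by rw [hSdef, Finset.card_disjSum, hA, hB]; omega
    have hSmem : S ∈ (Finset.univ : Finset n).powersetCard k :=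
      Finset.mem_powersetCard_univ.2 hScard
    obtain ⟨heinj, herange⟩ := he S hSmem
    set s : n → ℂ := Sum.elim (fun _ => (1 : ℂ)) (fun _ => (-1 : ℂ)) with hsdef
    set C := Amat.submatrix id (e S) with hC
    have hBsub : Bmat.submatrix (e S) id = Matrix.diagonal (fun i => s (e S i)) * C.conjTranspose := by
      ext i j
      rw [Matrix.diagonal_mul]
      rcases hx : e S i with p | q
      · simp [hBmat, hsdef, hC, hAmat, Matrix.conjTranspose_apply, hx]
      · simp [hBmat, hsdef, hC, hAmat, Matrix.conjTranspose_apply, hx]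
    have hprod : (∏ i, s (e S i)) = (-1 : ℂ) ^ m := by
      have himg : Finset.univ.image (e S) = S := by
        apply Finset.coe_injective
        rw [Finset.coe_image, Finset.coe_univ, Set.image_univ, herange]
      calc (∏ i, s (e S i)) = ∏ x ∈ Finset.univ.image (e S), s x :=
            (Finset.prod_image fun i _ j _ h => heinj h).symm
        _ = ∏ x ∈ S, s x := by rw [himg]
        _ = (∏ a ∈ A, s (Sum.inl a)) * ∏ b ∈ B, s (Sum.inr b) := Finset.prod_disjSum A B s
        _ = (-1 : ℂ) ^ m := by simp [hsdef, hB]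
    have hdetB : (Bmat.submatrix (e S) id).det = (-1 : ℂ) ^ m * (starRingEnd ℂ) C.det := by
      rw [hBsub, Matrix.det_mul, Matrix.det_diagonal, hprod, Matrix.det_conjTranspose]
      rfl
    have hcardAB : Fintype.card (↥A ⊕ ↥B) = k := by
      rw [Fintype.card_sum, Fintype.card_coe, Fintype.card_coe, hA, hB]; omega
    set u : Fin k → n := fun j =>
      Sum.map Subtype.val Subtype.val ((Fintype.equivFinOfCardEq hcardAB).symm j) with hu
    have huinj : Function.Injective u :=
      (Subtype.val_injective.sumMap Subtype.val_injective).comp (Equiv.injective _)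
    have hurange : Set.range u = ↑S := by
      rw [hu, show (fun j => Sum.map (Subtype.val : ↥A → Fin P) (Subtype.val : ↥B → Fin Q)
            ((Fintype.equivFinOfCardEq hcardAB).symm j))
          = (Sum.map Subtype.val Subtype.val) ∘ (Fintype.equivFinOfCardEq hcardAB).symm from rfl,
        Set.range_comp, Equiv.range_eq_univ, Set.image_univ]
      ext x
      constructor
      · rintro ⟨y, rfl⟩
        cases y with
        | inl a => exact Finset.inl_mem_disjSum.2 a.2
        | inr b => exact Finset.inr_mem_disjSum.2 b.2
      · intro hx
        rcases Finset.mem_disjSum.1 (Finset.mem_coe.1 hx) with ⟨a, ha, rfl⟩ | ⟨b, hb, rfl⟩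
        · exact ⟨Sum.inl ⟨a, ha⟩, rfl⟩
        · exact ⟨Sum.inr ⟨b, hb⟩, rfl⟩
    have hsubdet : subDet f g z A B = (Amat.submatrix id u).det := by
      rw [subDet, dif_pos hcardAB]
      congr 1
      ext i j
      rcases hx : (Fintype.equivFinOfCardEq hcardAB).symm j with a | b
      · simp [hu, hAmat, hx]
      · simp [hu, hAmat, hx]
    have hnormSq : Complex.normSq (subDet f g z A B) = Complex.normSq C.det := by
      rw [hsubdet, hC]
      exact normSq_det_submatrix_congr Amat u (e S) huinj heinj (by rw [hurange, herange])
    rw [hdetB, hnormSq]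
    rw [show C.det * ((-1 : ℂ) ^ m * (starRingEnd ℂ) C.det)
        = (-1 : ℂ) ^ m * (C.det * (starRingEnd ℂ) C.det) from by ring,
      Complex.mul_conj]
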